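/- Reachability decomposition under edge deletion: suppose E u v holds and E'' is obtained from E by removing the edge (u, v). Then for all vertices x, y: x reaches y under E if and only if x reaches y under E'', or (x reaches u under E'' and v reaches y under E''). -/

import Mathlib

theorem reach_remove_edge {V : Type*} (E : V → V → Prop) (u v : V)
    (huv : E u v)
    (E'' : V → V → Prop) (hE'' : ∀ a b, E'' a b ↔ E a b ∧ ¬(a = u ∧ b = v)) :
    ∀ x y : V, Relation.ReflTransGen E x y ↔
      Relation.ReflTransGen E'' x y ∨
        (Relation.ReflTransGen E'' x u ∧ Relation.ReflTransGen E'' v y) := by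
  intro x y
  constructor
  · intro h
    induction h with
    | refl => exact Or.inl .refl
    | tail hxb hby ih =>
      rename_i b c
      by_cases hbc : b = u ∧ c = v
      · obtain ⟨rfl, rfl⟩ := hbc
        rcases ih with h | ⟨h, _⟩
        · exact Or.inr ⟨h, .refl⟩
        · exact Or.inr ⟨h, .refl⟩
      · have e'' : E'' b c := (hE'' b c).mpr ⟨hby, hbc⟩
        rcases ih with h | ⟨h1, h2⟩
        · exact Or.inl (h.tail e'')
        · exact Or.inr ⟨h1, h2.tail e''⟩
  · have sub : ∀ a b, Relation.ReflTransGen E'' a b → Relation.ReflTransGen E a b := by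
      intro a b h
      exact Relation.ReflTransGen.mono (fun p q hpq => ((hE'' p q).mp hpq).1) _ _ h
    rintro (h | ⟨h1, h2⟩)
    · exact sub _ _ h
    · exact ((sub _ _ h1).tail huv).trans (sub _ _ h2)
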